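/- Line-circle continuity: in a real inner product space, if dist c p < r (p is strictly inside the circle with center c and radius r) and b ≠ p, then there exist points x and y with dist c x = r, dist c y = r, Sbtw ℝ x p y, and both x and y collinear with p and b (Collinear ℝ {p, b, x} and Collinear ℝ {p, b, y}): the line through p and b meets the circle in two points with p strictly between them. -/

import Mathlib

section Aux

variable {V : Type*} [NormedAddCommGroup V] [InnerProductSpace ℝ V]

private lemma norm_sq_aux (u d : V) (t : ℝ) :
    ‖u + t • d‖ ^ 2 = ‖d‖ ^ 2 * t ^ 2 + 2 * inner ℝ u d * t + ‖u‖ ^ 2 := by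
  have h := norm_add_sq_real u (t • d)
  rw [real_inner_smul_right, norm_smul, mul_pow, Real.norm_eq_abs, sq_abs] at h
  rw [h]; ring

private lemma quad_roots (a B C : ℝ) (ha : 0 < a) (hC : C < 0) :
    ∃ s t : ℝ, s < 0 ∧ 0 < t ∧ a * s ^ 2 + 2 * B * s + C = 0 ∧
      a * t ^ 2 + 2 * B * t + C = 0 := by
  set D : ℝ := B ^ 2 - a * C with hD
  have hDpos : B ^ 2 < D := by
    have h3 : 0 < a * (-C) := mul_pos ha (by linarith)
    simp only [hD]; nlinarith
  have hsq : Real.sqrt D ^ 2 = D := Real.sq_sqrt (by nlinarith [sq_nonneg B])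
  have habs : |B| < Real.sqrt D := by
    have := Real.sqrt_lt_sqrt (sq_nonneg B) hDpos
    rwa [Real.sqrt_sq_eq_abs] at this
  refine ⟨(-B - Real.sqrt D) / a, (-B + Real.sqrt D) / a, ?_, ?_, ?_, ?_⟩
  · apply div_neg_of_neg_of_pos _ ha
    have := neg_abs_le B
    linarith
  · apply div_pos _ ha
    have := le_abs_self B
    linarith
  · field_simp
    nlinarith [hsq]
  · field_simp
    nlinarith [hsq]

end Aux

/-- Line-circle continuity: a line through a point strictly inside a circle meets the
circle in two points, with the given point strictly between them. -/
theorem line_circle_continuity {V : Type*} [NormedAddCommGroup V] [InnerProductSpace ℝ V]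
    {c p b : V} {r : ℝ} (hin : dist c p < r) (hbp : b ≠ p) :
    ∃ x y : V, dist c x = r ∧ dist c y = r ∧ Sbtw ℝ x p y ∧
      Collinear ℝ ({p, b, x} : Set V) ∧ Collinear ℝ ({p, b, y} : Set V) := by
  have hd0 : b - p ≠ 0 := sub_ne_zero.mpr hbp
  have ha0 : (0:ℝ) < ‖b - p‖ ^ 2 := pow_pos (norm_pos_iff.mpr hd0) 2
  have hr0 : 0 < r := lt_of_le_of_lt dist_nonneg hin
  have hC0 : ‖p - c‖ ^ 2 - r ^ 2 < 0 := by
    have h1 : ‖p - c‖ < r := by rwa [← dist_eq_norm, dist_comm]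
    have h2 : ‖p - c‖ ^ 2 < r ^ 2 := by
      apply pow_lt_pow_left₀ h1 (norm_nonneg _)
      norm_num
    linarith
  obtain ⟨s, t, hslt, htgt, hrs, hrt⟩ :=
    quad_roots (‖b - p‖ ^ 2) (inner ℝ (p - c) (b - p)) (‖p - c‖ ^ 2 - r ^ 2) ha0 hC0
  have key : ∀ u : ℝ, ‖b - p‖ ^ 2 * u ^ 2 + 2 * inner ℝ (p - c) (b - p) * u +
      (‖p - c‖ ^ 2 - r ^ 2) = 0 → dist c (p + u • (b - p)) = r := by
    intro u hu
    have h1 : ‖(p - c) + u • (b - p)‖ ^ 2 = r ^ 2 := by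
      rw [norm_sq_aux]; linarith
    have h2 : dist c (p + u • (b - p)) = ‖(p - c) + u • (b - p)‖ := by
      rw [dist_comm, dist_eq_norm]
      congr 1
      abel
    rw [h2]
    nlinarith [norm_nonneg ((p - c) + u • (b - p))]
  have hcol : ∀ u : ℝ, Collinear ℝ ({p, b, p + u • (b - p)} : Set V) := by
    intro u
    rw [collinear_iff_of_mem (Set.mem_insert p _)]
    refine ⟨b - p, fun q hq => ?_⟩
    simp only [Set.mem_insert_iff, Set.mem_singleton_iff] at hq
    rcases hq with rfl | rfl | rfl
    · exact ⟨0, by simp⟩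
    · exact ⟨1, by simp only [vadd_eq_add, one_smul]; abel⟩
    · exact ⟨u, by simp only [vadd_eq_add]; abel⟩
  refine ⟨p + s • (b - p), p + t • (b - p), key s hrs, key t hrt, ?_, hcol s, hcol t⟩
  constructor
  · rw [← mem_segment_iff_wbtw, segment_eq_image']
    have hts : (0:ℝ) < t - s := by linarith
    refine ⟨(-s) / (t - s), ⟨div_nonneg (by linarith) (by linarith), ?_⟩, ?_⟩
    · rw [div_le_one hts]; linarith
    · show p + s • (b - p) + (-s / (t - s)) • ((p + t • (b - p)) - (p + s • (b - p))) = p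
      have h4 : (p + t • (b - p)) - (p + s • (b - p)) = (t - s) • (b - p) := by
        rw [sub_smul]; abel
      rw [h4, smul_smul, div_mul_cancel₀ _ (ne_of_gt hts), neg_smul]
      abel
  · constructor
    · intro h
      apply hd0
      have h5 : s • (b - p) = 0 := by
        have := h.symm
        rwa [← sub_eq_zero, add_sub_cancel_left] at this
      exact (smul_eq_zero.mp h5).resolve_left (ne_of_lt hslt)
    · intro h
      apply hd0
      have h5 : t • (b - p) = 0 := by
        have := h.symm
        rwa [← sub_eq_zero, add_sub_cancel_left] at this
      exact (smul_eq_zero.mp h5).resolve_left (ne_of_gt htgt)
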